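/- Let n ≥ 1 be an integer and r > n/2. There exists a constant C > 0 (depending only on n and r) such that for all a ≥ 0 and all b > 0, ∫_{ℝⁿ} (1 + (|y| − a)²/b)^{−r} dy ≤ C (b^{n/2} + b^{1/2} a^{n−1}). -/

import Mathlib

open MeasureTheory

open Set Metric in
private lemma stmt10_pow_add_le (x y : ℝ) (hx : 0 ≤ x) (hy : 0 ≤ y) (m : ℕ) :
    (x + y) ^ m ≤ 2 ^ m * (x ^ m + y ^ m) := by
  calc (x + y) ^ m ≤ (2 * max x y) ^ m := by
        apply pow_le_pow_left₀ (by positivity)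
        rcases max_cases x y with ⟨h, h'⟩ | ⟨h, h'⟩ <;> rw [h] <;> linarith
    _ = 2 ^ m * (max x y) ^ m := by rw [mul_pow]
    _ ≤ 2 ^ m * (x ^ m + y ^ m) := by
        apply mul_le_mul_of_nonneg_left _ (by positivity)
        rcases max_cases x y with ⟨h, _⟩ | ⟨h, _⟩ <;> rw [h] <;> nlinarith [pow_nonneg hx m, pow_nonneg hy m]

open Set Metric in
private lemma stmt10_integrable (r : ℝ) (hr : 0 < r) (k : ℕ) (hk : (k : ℝ) < 2 * r - 1) :
    Integrable (fun u : ℝ => |u| ^ k * (1 + u ^ 2) ^ (-r)) := by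
  have hcont : Continuous fun u : ℝ => |u| ^ k * (1 + u ^ 2) ^ (-r) := by
    apply Continuous.mul (by continuity)
    apply Continuous.rpow_const (by continuity)
    intro x; left; positivity
  have hIoi : IntegrableOn (fun u : ℝ => |u| ^ k * (1 + u ^ 2) ^ (-r)) (Ioi 1) := by
    apply Integrable.mono' (g := fun u : ℝ => u ^ ((k : ℝ) - 2 * r))
      (integrableOn_Ioi_rpow_of_lt (by linarith) one_pos)
      hcont.aestronglyMeasurable.restrict
    filter_upwards [ae_restrict_mem measurableSet_Ioi] with x hx
    have hx1 : (1 : ℝ) < x := hx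
    have hx0 : (0 : ℝ) < x := by linarith
    rw [Real.norm_eq_abs, abs_of_nonneg (by positivity)]
    have h1 : |x| ^ k = x ^ ((k : ℝ)) := by rw [abs_of_pos hx0, Real.rpow_natCast]
    have h2 : (1 + x ^ 2) ^ (-r) ≤ x ^ (-(2 * r)) := by
      have hxx : (x ^ 2 : ℝ) ≤ 1 + x ^ 2 := by linarith
      calc (1 + x ^ 2) ^ (-r) ≤ (x ^ 2) ^ (-r) :=
            Real.rpow_le_rpow_of_nonpos (by positivity) hxx (by linarith)
        _ = x ^ (-(2 * r)) := by
            rw [← Real.rpow_natCast x 2, ← Real.rpow_mul hx0.le]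
            norm_num
    calc |x| ^ k * (1 + x ^ 2) ^ (-r) ≤ x ^ ((k : ℝ)) * x ^ (-(2 * r)) := by
          rw [h1]
          exact mul_le_mul_of_nonneg_left h2 (by positivity)
      _ = x ^ ((k : ℝ) - 2 * r) := by rw [← Real.rpow_add hx0]; ring_nf
  have hIio : IntegrableOn (fun u : ℝ => |u| ^ k * (1 + u ^ 2) ^ (-r)) (Iio (-1)) := by
    rw [← (Measure.measurePreserving_neg (volume : Measure ℝ)).integrableOn_comp_preimage
        (Homeomorph.neg ℝ).measurableEmbedding]
    simpa only [Function.comp_def, abs_neg, neg_sq, neg_preimage, neg_Iio, neg_neg] using hIoi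
  rw [← integrableOn_univ, ← Iio_union_Ici (a := (-1 : ℝ)), integrableOn_union]
  refine ⟨hIio, ?_⟩
  have h : Ici (-1 : ℝ) = Icc (-1) 1 ∪ Ioi 1 := (Icc_union_Ioi_eq_Ici (by norm_num)).symm
  rw [h, integrableOn_union]
  exact ⟨hcont.integrableOn_Icc, hIoi⟩

open Set Metric in
/-- Volume bound for a fattened sphere of radius `a` and thickness `√b`:
∫_{ℝⁿ} (1 + (|y| − a)²/b)^{−r} dy ≤ C (b^{n/2} + b^{1/2} a^{n−1}). -/
theorem stmt_10 (n : ℕ) (hn : 1 ≤ n) (r : ℝ) (hr : r > n / 2) :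
    ∃ C : ℝ, 0 < C ∧ ∀ a : ℝ, 0 ≤ a → ∀ b : ℝ, 0 < b →
      (∫ y : EuclideanSpace ℝ (Fin n), (1 + (‖y‖ - a) ^ 2 / b) ^ (-r))
        ≤ C * (b ^ ((n : ℝ) / 2) + b ^ ((1 : ℝ) / 2) * a ^ ((n : ℝ) - 1)) := by
  have hn' : (1 : ℝ) ≤ (n : ℝ) := by exact_mod_cast hn
  have hr0 : 0 < r := by nlinarith
  set k := n - 1 with hkdef
  have hkn : (k : ℝ) = (n : ℝ) - 1 := by
    rw [hkdef, Nat.cast_sub hn, Nat.cast_one]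
  have hkn' : k + 1 = n := Nat.succ_pred_eq_of_pos hn
  have hk : (k : ℝ) < 2 * r - 1 := by rw [hkn]; nlinarith
  have hk0 : (0 : ℝ) < 2 * r - 1 := by nlinarith
  -- the one-dimensional profile integrals
  set J : ℕ → ℝ := fun m => ∫ u : ℝ, |u| ^ m * (1 + u ^ 2) ^ (-r) with hJdef
  have hJint : ∀ m : ℕ, (m : ℝ) < 2 * r - 1 →
      Integrable (fun u : ℝ => |u| ^ m * (1 + u ^ 2) ^ (-r)) := fun m hm =>
    stmt10_integrable r hr0 m hm
  have hJnonneg : ∀ m : ℕ, 0 ≤ J m := fun m =>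
    integral_nonneg fun u => by positivity
  -- dimensional constant
  haveI : Nonempty (Fin n) := ⟨⟨0, hn⟩⟩
  set κ : ℝ := n * (volume (ball (0 : EuclideanSpace ℝ (Fin n)) 1)).toReal with hκdef
  have hκ : 0 < κ := by
    apply mul_pos (by exact_mod_cast Nat.pos_of_ne_zero (by omega))
    exact ENNReal.toReal_pos (measure_ball_pos _ _ one_pos).ne' measure_ball_lt_top.ne
  refine ⟨κ * 2 ^ k * (J k + J 0) + 1, by positivity, fun a ha b hb => ?_⟩
  set c : ℝ := b ^ ((1 : ℝ) / 2) with hcdef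
  have hc : 0 < c := Real.rpow_pos_of_pos hb _
  have hc2 : c ^ 2 = b := by
    rw [hcdef, ← Real.rpow_natCast (b ^ ((1:ℝ)/2)) 2, ← Real.rpow_mul hb.le]
    norm_num
  -- scaling identity
  have hscale : ∀ m : ℕ, (∫ s : ℝ, |s| ^ m * (1 + s ^ 2 / b) ^ (-r))
      = c ^ (m + 1) * J m := by
    intro m
    have h1 := MeasureTheory.Measure.integral_comp_mul_left
      (fun s : ℝ => |s| ^ m * (1 + s ^ 2 / b) ^ (-r)) c
    have h2 : (fun x : ℝ => |c * x| ^ m * (1 + (c * x) ^ 2 / b) ^ (-r))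
        = fun x : ℝ => c ^ m * (|x| ^ m * (1 + x ^ 2) ^ (-r)) := by
      funext x
      rw [abs_mul, abs_of_pos hc, mul_pow, mul_pow, hc2,
        mul_div_cancel_left₀ _ hb.ne']
      ring
    rw [h2, integral_const_mul, abs_of_pos (inv_pos.mpr hc), smul_eq_mul] at h1
    have hJm : J m = ∫ u : ℝ, |u| ^ m * (1 + u ^ 2) ^ (-r) := rfl
    rw [← hJm] at h1
    have h3 : c * (c ^ m * J m) = ∫ s : ℝ, |s| ^ m * (1 + s ^ 2 / b) ^ (-r) := by
      rw [h1, ← mul_assoc, mul_inv_cancel₀ hc.ne', one_mul]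
    rw [← h3]
    ring
  -- integrability of the comparison functions
  have hF : ∀ m : ℕ, (m : ℝ) < 2 * r - 1 →
      Integrable (fun s : ℝ => |s| ^ m * (1 + s ^ 2 / b) ^ (-r)) := by
    intro m hm
    have heq : (fun s : ℝ => |s| ^ m * (1 + s ^ 2 / b) ^ (-r))
        = fun s : ℝ => c ^ m * (|c⁻¹ * s| ^ m * (1 + (c⁻¹ * s) ^ 2) ^ (-r)) := by
      funext s
      have h3 : (c⁻¹ * s) ^ 2 = s ^ 2 / b := by
        rw [mul_pow, inv_pow, hc2]; ring
      rw [abs_mul, abs_of_pos (inv_pos.mpr hc), mul_pow, h3, inv_pow,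
        ← mul_assoc, ← mul_assoc, mul_inv_cancel₀ (pow_ne_zero m hc.ne'), one_mul]
    rw [heq]
    exact (((MeasureTheory.integrable_comp_mul_left_iff
      (fun u : ℝ => |u| ^ m * (1 + u ^ 2) ^ (-r)) (inv_ne_zero hc.ne')).mpr
      (hJint m hm))).const_mul _
  have hHk : Integrable (fun ρ : ℝ => |ρ - a| ^ k * (1 + (ρ - a) ^ 2 / b) ^ (-r)) :=
    (hF k hk).comp_sub_right a
  have hH0 : Integrable (fun ρ : ℝ => (1 + (ρ - a) ^ 2 / b) ^ (-r)) := by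
    have := (hF 0 (by push_cast; linarith)).comp_sub_right a
    simpa using this
  set G : ℝ → ℝ := fun ρ => 2 ^ k *
      (|ρ - a| ^ k * (1 + (ρ - a) ^ 2 / b) ^ (-r) + a ^ k * (1 + (ρ - a) ^ 2 / b) ^ (-r))
    with hGdef
  have hGint : Integrable G := ((hHk.add (hH0.const_mul (a ^ k))).const_mul _)
  have hGnonneg : ∀ ρ : ℝ, 0 ≤ G ρ := fun ρ => by
    have h1 : (0:ℝ) < 1 + (ρ - a) ^ 2 / b := by positivity
    have := Real.rpow_nonneg h1.le (-r)
    positivity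
  -- polar coordinates
  haveI : Nontrivial (EuclideanSpace ℝ (Fin n)) := inferInstance
  rw [integral_fun_norm_addHaar (volume : Measure (EuclideanSpace ℝ (Fin n)))
      (fun ρ => (1 + (ρ - a) ^ 2 / b) ^ (-r))]
  rw [finrank_euclideanSpace_fin]
  rw [nsmul_eq_mul, smul_eq_mul, ← mul_assoc, measureReal_def, ← hκdef]
  -- bound the radial integral
  have hmono : (∫ y in Ioi (0:ℝ), y ^ (n - 1) • (1 + (y - a) ^ 2 / b) ^ (-r))
      ≤ ∫ ρ : ℝ, G ρ := by
    have step1 : (∫ y in Ioi (0:ℝ), y ^ (n - 1) • (1 + (y - a) ^ 2 / b) ^ (-r))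
        ≤ ∫ y in Ioi (0:ℝ), G y := by
      apply integral_mono_of_nonneg
      · filter_upwards [ae_restrict_mem measurableSet_Ioi] with y hy
        have hy0 : (0:ℝ) < y := hy
        have h1 : (0:ℝ) < 1 + (y - a) ^ 2 / b := by positivity
        have := Real.rpow_nonneg h1.le (-r)
        simp only [smul_eq_mul]
        positivity
      · exact hGint.restrict
      · filter_upwards [ae_restrict_mem measurableSet_Ioi] with y hy
        have hy0 : (0:ℝ) < y := hy
        have h1 : (0:ℝ) < 1 + (y - a) ^ 2 / b := by positivity
        have hfnn : 0 ≤ (1 + (y - a) ^ 2 / b) ^ (-r) := Real.rpow_nonneg h1.le _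
        have hyb : y ^ (n - 1) ≤ 2 ^ k * (|y - a| ^ k + a ^ k) := by
          calc y ^ (n - 1) = y ^ k := by rw [hkdef]
            _ ≤ (|y - a| + a) ^ k := by
                apply pow_le_pow_left₀ hy0.le
                have := abs_nonneg (y - a)
                have := le_abs_self (y - a)
                linarith
            _ ≤ 2 ^ k * (|y - a| ^ k + a ^ k) :=
                stmt10_pow_add_le _ _ (abs_nonneg _) ha k
        simp only [smul_eq_mul, hGdef]
        calc y ^ (n - 1) * (1 + (y - a) ^ 2 / b) ^ (-r)
            ≤ (2 ^ k * (|y - a| ^ k + a ^ k)) * (1 + (y - a) ^ 2 / b) ^ (-r) :=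
              mul_le_mul_of_nonneg_right hyb hfnn
          _ = 2 ^ k * (|y - a| ^ k * (1 + (y - a) ^ 2 / b) ^ (-r)
                + a ^ k * (1 + (y - a) ^ 2 / b) ^ (-r)) := by ring
    refine step1.trans ?_
    exact setIntegral_le_integral hGint (Filter.Eventually.of_forall hGnonneg)
  -- compute ∫ G
  have hGval : (∫ ρ : ℝ, G ρ)
      = 2 ^ k * (c ^ (k + 1) * J k + a ^ k * (c * J 0)) := by
    rw [hGdef]
    rw [integral_const_mul]
    rw [integral_add hHk (hH0.const_mul (a ^ k))]
    rw [integral_const_mul]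
    have t1 : (∫ ρ : ℝ, |ρ - a| ^ k * (1 + (ρ - a) ^ 2 / b) ^ (-r))
        = c ^ (k + 1) * J k := by
      rw [integral_sub_right_eq_self (μ := volume) (fun s : ℝ => |s| ^ k * (1 + s ^ 2 / b) ^ (-r)) a]
      exact hscale k
    have t2 : (∫ ρ : ℝ, (1 + (ρ - a) ^ 2 / b) ^ (-r)) = c * J 0 := by
      have := integral_sub_right_eq_self (μ := volume) (fun s : ℝ => |s| ^ 0 * (1 + s ^ 2 / b) ^ (-r)) a
      simp only [pow_zero, one_mul] at this
      rw [this]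
      have := hscale 0
      simpa using this
    rw [t1, t2]
  -- finish
  have hck : c ^ (k + 1) = b ^ ((n : ℝ) / 2) := by
    rw [hkn', hcdef, ← Real.rpow_natCast (b ^ ((1:ℝ)/2)) n, ← Real.rpow_mul hb.le]
    congr 1
    ring
  have hak : a ^ k = a ^ ((n : ℝ) - 1) := by
    rw [← hkn, Real.rpow_natCast]
  have hXnn : 0 ≤ b ^ ((n : ℝ) / 2) := Real.rpow_nonneg hb.le _
  have hYnn : 0 ≤ c * a ^ ((n : ℝ) - 1) := by
    apply mul_nonneg hc.le
    rw [← hak]; positivity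
  calc κ * ∫ y in Ioi (0:ℝ), y ^ (n - 1) • (1 + (y - a) ^ 2 / b) ^ (-r)
      ≤ κ * ∫ ρ : ℝ, G ρ := mul_le_mul_of_nonneg_left hmono hκ.le
    _ = κ * (2 ^ k * (b ^ ((n : ℝ) / 2) * J k
          + a ^ ((n : ℝ) - 1) * (c * J 0))) := by rw [hGval, hck, hak]
    _ ≤ (κ * 2 ^ k * (J k + J 0) + 1) * (b ^ ((n : ℝ) / 2) + c * a ^ ((n : ℝ) - 1)) := by
        have h2k : (0:ℝ) < 2 ^ k := by positivity
        nlinarith [hJnonneg k, hJnonneg 0, hXnn, hYnn, hκ.le,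
          mul_nonneg (mul_nonneg hκ.le h2k.le) (mul_nonneg (hJnonneg k) hYnn),
          mul_nonneg (mul_nonneg hκ.le h2k.le) (mul_nonneg (hJnonneg 0) hXnn)]
    _ = (κ * 2 ^ k * (J k + J 0) + 1) * (b ^ ((n : ℝ) / 2)
          + b ^ ((1 : ℝ) / 2) * a ^ ((n : ℝ) - 1)) := by rw [hcdef]
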